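/- For all Θ = (θ₁,…,θ_k) and Θ′ = (θ′₁,…,θ′_k) in ([−M,M]^p)^k, sup over x ∈ [−M,M]^p of |f_Θ(x) − f_{Θ′}(x)| is at most 4 τ H_p M √p · Σ_{j=1}^k ‖θ_j − θ′_j‖₂. -/

import Mathlib

open MeasureTheory ProbabilityTheory Real Filter
open scoped ENNReal

/-- Bregman divergence generated by a differentiable function `φ`. -/
noncomputable def dphi {p : ℕ} (φ : EuclideanSpace ℝ (Fin p) → ℝ)
    (x y : EuclideanSpace ℝ (Fin p)) : ℝ :=
  φ x - φ y - inner ℝ (gradient φ y) (x - y)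

/-- The cube `[-M, M]^p` in `ℝ^p`. -/
def cube (p : ℕ) (M : ℝ) : Set (EuclideanSpace ℝ (Fin p)) := {x | ∀ i, |x i| ≤ M}

/-- The clustering objective `f_Θ(x) = Ψ(d_φ(x,θ₁),…,d_φ(x,θ_k))`. -/
noncomputable def fTheta {p k : ℕ} (φ : EuclideanSpace ℝ (Fin p) → ℝ)
    (Ψ : (Fin k → ℝ) → ℝ) (Θ : Fin k → EuclideanSpace ℝ (Fin p))
    (x : EuclideanSpace ℝ (Fin p)) : ℝ :=
  Ψ (fun j => dphi φ x (Θ j))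

/-- Subgradient inequality for a differentiable convex function. -/
lemma grad_ineq {p : ℕ} (φ : EuclideanSpace ℝ (Fin p) → ℝ)
    (hφconv : ConvexOn ℝ Set.univ φ) (hφdiff : Differentiable ℝ φ)
    (x y : EuclideanSpace ℝ (Fin p)) :
    (inner ℝ (gradient φ y) (x - y) : ℝ) ≤ φ x - φ y := by
  set L : ℝ →ᵃ[ℝ] EuclideanSpace ℝ (Fin p) := AffineMap.lineMap y x with hL
  have hg : ConvexOn ℝ Set.univ (φ ∘ L) := by
    have := hφconv.comp_affineMap L
    simpa using this
  have hderiv : HasDerivAt (φ ∘ L) ((fderiv ℝ φ y) (x - y)) 0 := by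
    have hline : HasDerivAt (fun t : ℝ => L t) (x - y) 0 := by
      have : HasDerivAt (fun t : ℝ => t • (x - y) + y) ((1:ℝ) • (x - y)) 0 :=
        ((hasDerivAt_id 0).smul_const (x - y)).add_const y
      simp only [one_smul] at this
      have heq : (fun t : ℝ => L t) = fun t : ℝ => t • (x - y) + y := by
        funext t; simp [hL, AffineMap.lineMap_apply_module]; module
      rw [heq]; exact this
    have hF : HasFDerivAt φ (fderiv ℝ φ (L 0)) (L 0) := (hφdiff (L 0)).hasFDerivAt
    have := hF.comp_hasDerivAt 0 hline
    simpa [hL, AffineMap.lineMap_apply_module] using this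
  have hs := hg.le_slope_of_hasDerivAt (Set.mem_univ 0) (Set.mem_univ 1) one_pos hderiv
  have hslope : slope (φ ∘ L) 0 1 = φ x - φ y := by
    simp [slope_def_field, hL, AffineMap.lineMap_apply_module]
  have hfd : (fderiv ℝ φ y) (x - y) = (inner ℝ (gradient φ y) (x - y) : ℝ) := by
    have hg' : HasGradientAt φ (gradient φ y) y := (hφdiff y).hasGradientAt
    rw [hasGradientAt_iff_hasFDerivAt] at hg'
    rw [hg'.fderiv]
    simp [InnerProductSpace.toDual_apply_apply]
  rw [hslope] at hs
  rw [← hfd]; exact hs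

lemma dphi_nonneg {p : ℕ} (φ : EuclideanSpace ℝ (Fin p) → ℝ)
    (hφconv : ConvexOn ℝ Set.univ φ) (hφdiff : Differentiable ℝ φ)
    (x y : EuclideanSpace ℝ (Fin p)) : 0 ≤ dphi φ x y := by
  have := grad_ineq φ hφconv hφdiff x y
  simp only [dphi]; linarith

lemma cube_dist_le {p : ℕ} {M : ℝ} (hM : 0 ≤ M)
    {u v : EuclideanSpace ℝ (Fin p)} (hu : u ∈ cube p M) (hv : v ∈ cube p M) :
    ‖u - v‖ ≤ 2 * M * Real.sqrt p := by
  have h : ‖u - v‖ = Real.sqrt (∑ i, ‖(u - v) i‖ ^ 2) := by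
    rw [EuclideanSpace.norm_eq]
  rw [h]
  have hb : (∑ i, ‖(u - v) i‖ ^ 2) ≤ ∑ _i : Fin p, (2 * M) ^ 2 := by
    apply Finset.sum_le_sum
    intro i _
    have hi : ‖(u - v) i‖ ≤ 2 * M := by
      have : (u - v) i = u i - v i := rfl
      rw [this, Real.norm_eq_abs]
      have := abs_sub (u i) (v i)
      have h1 := hu i; have h2 := hv i
      calc |u i - v i| ≤ |u i| + |v i| := abs_sub _ _
        _ ≤ 2 * M := by linarith
    have := sq_nonneg ‖(u - v) i‖
    nlinarith [norm_nonneg ((u - v) i)]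
  calc Real.sqrt (∑ i, ‖(u - v) i‖ ^ 2) ≤ Real.sqrt (∑ _i : Fin p, (2 * M) ^ 2) :=
        Real.sqrt_le_sqrt hb
    _ = 2 * M * Real.sqrt p := by
        rw [Finset.sum_const, Finset.card_univ, Fintype.card_fin, nsmul_eq_mul]
        rw [Real.sqrt_mul (by positivity), Real.sqrt_sq (by positivity)]
        ring

/-- `f_Θ` is Lipschitz in the centroid configuration `Θ`, uniformly over the
cube: `sup_{x ∈ [-M,M]^p} |f_Θ(x) - f_{Θ'}(x)| ≤ 4 τ H M √p ∑_j ‖θ_j - θ'_j‖₂`. -/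
theorem fTheta_lipschitz_in_centroids
    {p k : ℕ} (hp : 0 < p) (hk : 0 < k) {M : ℝ} (hM : 0 < M)
    (φ : EuclideanSpace ℝ (Fin p) → ℝ)
    (hφconv : ConvexOn ℝ Set.univ φ) (hφdiff : Differentiable ℝ φ)
    (hφzero : φ 0 = 0) (hgradzero : gradient φ 0 = 0)
    {H : ℝ} (hH : 0 ≤ H)
    (hgradlip : ∀ x ∈ cube p M, ∀ y ∈ cube p M,
      ‖gradient φ x - gradient φ y‖ ≤ H * ‖x - y‖)
    (Ψ : (Fin k → ℝ) → ℝ)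
    (hΨnonneg : ∀ u : Fin k → ℝ, (∀ j, 0 ≤ u j) → 0 ≤ Ψ u)
    (hΨmono : ∀ u v : Fin k → ℝ, (∀ j, 0 ≤ u j) → (∀ j, u j ≤ v j) → Ψ u ≤ Ψ v)
    (hΨzero : Ψ 0 = 0)
    {τ : ℝ} (hτ : 0 < τ)
    (hΨlip : ∀ u v : Fin k → ℝ, (∀ j, 0 ≤ u j) → (∀ j, 0 ≤ v j) →
      |Ψ u - Ψ v| ≤ τ * ∑ j, |u j - v j|)
    :
    ∀ Θ Θ' : Fin k → EuclideanSpace ℝ (Fin p),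
      (∀ j, Θ j ∈ cube p M) → (∀ j, Θ' j ∈ cube p M) →
      ∀ x ∈ cube p M,
        |fTheta φ Ψ Θ x - fTheta φ Ψ Θ' x| ≤
          4 * τ * H * M * Real.sqrt p * ∑ j, ‖Θ j - Θ' j‖ := by
  intro Θ Θ' hΘ hΘ' x hx
  have key : ∀ j : Fin k, |dphi φ x (Θ j) - dphi φ x (Θ' j)| ≤
      4 * H * M * Real.sqrt p * ‖Θ j - Θ' j‖ := by
    intro j
    set θ := Θ j with hθ
    set θ' := Θ' j with hθ'
    set gθ := gradient φ θ with hgθ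
    set gθ' := gradient φ θ' with hgθ'
    -- algebraic identity
    have h1 : (inner ℝ gθ' (x - θ') : ℝ) = inner ℝ gθ' (x - θ) + inner ℝ gθ' (θ - θ') := by
      rw [← inner_add_right]; congr 1; abel
    have hid : dphi φ x θ - dphi φ x θ' =
        -(dphi φ θ θ') + (inner ℝ (gθ' - gθ) (x - θ) : ℝ) := by
      simp only [dphi, inner_sub_left, ← hgθ, ← hgθ']
      linarith
    have hnn : 0 ≤ dphi φ θ θ' := dphi_nonneg φ hφconv hφdiff θ θ'
    have hnn' : 0 ≤ dphi φ θ' θ := dphi_nonneg φ hφconv hφdiff θ' θ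
    have h2 : (inner ℝ gθ (θ' - θ) : ℝ) = -(inner ℝ gθ (θ - θ') : ℝ) := by
      rw [← inner_neg_right]; congr 1; abel
    have hsum : dphi φ θ θ' + dphi φ θ' θ = (inner ℝ (gθ - gθ') (θ - θ') : ℝ) := by
      simp only [dphi, inner_sub_left, ← hgθ, ← hgθ']
      linarith
    have hdist : ‖θ - θ'‖ ≤ 2 * M * Real.sqrt p :=
      cube_dist_le hM.le (hΘ j) (hΘ' j)
    have hdistx : ‖x - θ‖ ≤ 2 * M * Real.sqrt p :=
      cube_dist_le hM.le hx (hΘ j)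
    have hlip : ‖gθ - gθ'‖ ≤ H * ‖θ - θ'‖ := hgradlip θ (hΘ j) θ' (hΘ' j)
    have hlip' : ‖gθ' - gθ‖ ≤ H * ‖θ - θ'‖ := by
      rw [norm_sub_rev]; exact hlip
    have hb1 : dphi φ θ θ' ≤ H * ‖θ - θ'‖ * (2 * M * Real.sqrt p) := by
      have hi : (inner ℝ (gθ - gθ') (θ - θ') : ℝ) ≤ ‖gθ - gθ'‖ * ‖θ - θ'‖ :=
        real_inner_le_norm _ _
      have : ‖gθ - gθ'‖ * ‖θ - θ'‖ ≤ (H * ‖θ - θ'‖) * (2 * M * Real.sqrt p) := by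
        apply mul_le_mul hlip hdist (norm_nonneg _) (by positivity)
      linarith
    have hb2 : |(inner ℝ (gθ' - gθ) (x - θ) : ℝ)| ≤ H * ‖θ - θ'‖ * (2 * M * Real.sqrt p) := by
      have hi := abs_real_inner_le_norm (gθ' - gθ) (x - θ)
      have : ‖gθ' - gθ‖ * ‖x - θ‖ ≤ (H * ‖θ - θ'‖) * (2 * M * Real.sqrt p) := by
        apply mul_le_mul hlip' hdistx (norm_nonneg _) (by positivity)
      linarith
    have habs : |dphi φ x θ - dphi φ x θ'| ≤
        dphi φ θ θ' + |(inner ℝ (gθ' - gθ) (x - θ) : ℝ)| := by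
      rw [hid]
      calc |-(dphi φ θ θ') + (inner ℝ (gθ' - gθ) (x - θ) : ℝ)|
          ≤ |-(dphi φ θ θ')| + |(inner ℝ (gθ' - gθ) (x - θ) : ℝ)| := abs_add_le _ _
        _ = dphi φ θ θ' + |(inner ℝ (gθ' - gθ) (x - θ) : ℝ)| := by
            rw [abs_neg, abs_of_nonneg hnn]
    calc |dphi φ x θ - dphi φ x θ'| ≤ dphi φ θ θ' + |(inner ℝ (gθ' - gθ) (x - θ) : ℝ)| := habs
      _ ≤ H * ‖θ - θ'‖ * (2 * M * Real.sqrt p) + H * ‖θ - θ'‖ * (2 * M * Real.sqrt p) := by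
          linarith
      _ = 4 * H * M * Real.sqrt p * ‖θ - θ'‖ := by ring
  have hu : ∀ j, 0 ≤ dphi φ x (Θ j) := fun j => dphi_nonneg φ hφconv hφdiff x (Θ j)
  have hv : ∀ j, 0 ≤ dphi φ x (Θ' j) := fun j => dphi_nonneg φ hφconv hφdiff x (Θ' j)
  have hlip := hΨlip (fun j => dphi φ x (Θ j)) (fun j => dphi φ x (Θ' j)) hu hv
  have hsum : (∑ j, |dphi φ x (Θ j) - dphi φ x (Θ' j)|) ≤
      ∑ j, 4 * H * M * Real.sqrt p * ‖Θ j - Θ' j‖ :=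
    Finset.sum_le_sum fun j _ => key j
  calc |fTheta φ Ψ Θ x - fTheta φ Ψ Θ' x|
      ≤ τ * ∑ j, |dphi φ x (Θ j) - dphi φ x (Θ' j)| := hlip
    _ ≤ τ * ∑ j, 4 * H * M * Real.sqrt p * ‖Θ j - Θ' j‖ :=
        mul_le_mul_of_nonneg_left hsum hτ.le
    _ = 4 * τ * H * M * Real.sqrt p * ∑ j, ‖Θ j - Θ' j‖ := by
        rw [← Finset.mul_sum]; ring
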